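/- Let (\gamma_k)_{k=0}^{\infty} be a multiplier sequence of non-negative real numbers. Then for every t \in [0,1], the sequence \{B_k(t)\}_{k=0}^{\infty} defined by B_k(t) = \sum_{j=0}^{k} \binom{k}{j} (1-t)^j \gamma_{k-j} t^{k-j} is a multiplier sequence. -/

import Mathlib

/-- The polynomial obtained by applying the sequence `γ` coefficientwise:
`T[∑ aₖ xᵏ] = ∑ γₖ aₖ xᵏ`. -/
noncomputable def applySeq (γ : ℕ → ℝ) (p : Polynomial ℝ) : Polynomial ℝ :=
  ∑ k ∈ Finset.range (p.natDegree + 1), Polynomial.C (γ k * p.coeff k) * Polynomial.X ^ k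

/-- A real polynomial has only real roots (over `ℂ`). -/
def RealRooted (p : Polynomial ℝ) : Prop :=
  ∀ z : ℂ, Polynomial.aeval z p = 0 → z.im = 0

/-- A classical multiplier sequence. -/
def IsMultiplierSequence (γ : ℕ → ℝ) : Prop :=
  ∀ p : Polynomial ℝ, RealRooted p → RealRooted (applySeq γ p)

namespace Complex

/-- Compatibility: the complex absolute value as an `AbsoluteValue` (the norm). -/
noncomputable def abs : AbsoluteValue ℂ ℝ := NormedField.toAbsoluteValue ℂ

lemma norm_eq_abs (z : ℂ) : ‖z‖ = Complex.abs z := rfl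

lemma sq_abs (z : ℂ) : Complex.abs z ^ 2 = Complex.normSq z := by
  rw [← norm_eq_abs, Complex.sq_norm]

lemma abs_ofReal (r : ℝ) : Complex.abs (r : ℂ) = |r| := by
  rw [← norm_eq_abs, Complex.norm_real, Real.norm_eq_abs]

lemma abs_natCast (n : ℕ) : Complex.abs (n : ℂ) = n := by
  rw [← norm_eq_abs, Complex.norm_natCast]

end Complex

namespace DeformedMS
open Polynomial Finset


lemma normSq_key (a v : ℂ) (R : ℝ) :
    Complex.normSq (((Complex.normSq a - R^2 : ℝ) : ℂ) - (starRingEnd ℂ) a * v) - R^2 * Complex.normSq v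
      = (Complex.normSq a - R^2) * (Complex.normSq (v - a) - R^2) := by
  simp only [Complex.normSq_apply, Complex.sub_re, Complex.sub_im, Complex.mul_re,
    Complex.mul_im, Complex.conj_re, Complex.conj_im, Complex.ofReal_re, Complex.ofReal_im]
  ring

lemma abs_le_iff_normSq_le (z : ℂ) (r : ℝ) (hr : 0 ≤ r) :
    Complex.abs z ≤ r ↔ Complex.normSq z ≤ r^2 := by
  rw [← Complex.sq_abs]
  exact (pow_le_pow_iff_left₀ (AbsoluteValue.nonneg _ _) hr (by norm_num)).symm

lemma abs_inv_disk_core (a v : ℂ) (R : ℝ) (hR : 0 ≤ R) (ha : R < Complex.abs a) (hv : v ≠ 0) :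
    Complex.abs (v - a) ≤ R ↔
      Complex.abs (((Complex.normSq a - R^2 : ℝ) : ℂ) - (starRingEnd ℂ) a * v) ≤ R * Complex.abs v := by
  have hK : 0 < Complex.normSq a - R^2 := by
    have : R^2 < (Complex.abs a)^2 := by nlinarith [AbsoluteValue.nonneg Complex.abs a]
    rw [Complex.sq_abs] at this; linarith
  have hkey := normSq_key a v R
  rw [abs_le_iff_normSq_le _ _ hR, abs_le_iff_normSq_le _ _ (by positivity), mul_pow,
    Complex.sq_abs]
  constructor
  · intro h
    have : (Complex.normSq a - R^2) * (Complex.normSq (v - a) - R^2) ≤ 0 := by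
      apply mul_nonpos_of_nonneg_of_nonpos (le_of_lt hK); linarith
    nlinarith [Complex.normSq_nonneg v]
  · intro h
    nlinarith [Complex.normSq_nonneg v]

lemma inv_form (K : ℝ) (hK : 0 < K) (a v : ℂ) (hv : v ≠ 0) (R : ℝ) :
    Complex.abs (v⁻¹ - (starRingEnd ℂ) a / (K : ℂ)) ≤ R / K ↔
      Complex.abs ((K : ℂ) - (starRingEnd ℂ) a * v) ≤ R * Complex.abs v := by
  have hK' : (K : ℂ) ≠ 0 := by exact_mod_cast hK.ne'
  have h1 : v⁻¹ - (starRingEnd ℂ) a / (K : ℂ) = ((K : ℂ) - (starRingEnd ℂ) a * v) / ((K : ℂ) * v) := by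
    field_simp
  rw [h1, map_div₀, map_mul]
  have habsK : Complex.abs (K : ℂ) = K := by
    rw [Complex.abs_ofReal, abs_of_pos hK]
  rw [habsK]
  have hv' : 0 < Complex.abs v := by
    simpa [AbsoluteValue.pos_iff] using hv
  rw [div_le_div_iff₀ (by positivity) hK]
  constructor
  · intro h; nlinarith
  · intro h; nlinarith

lemma eval_msprod (M : Multiset ℂ) (w : ℂ) :
    eval w ((M.map (fun r => X - C r)).prod) = (M.map (fun r => w - r)).prod := by
  rw [eval_multiset_prod, Multiset.map_map]
  simp

lemma eval_msprod_ne_zero (M : Multiset ℂ) (w : ℂ) (h : ∀ r ∈ M, w ≠ r) :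
    eval w ((M.map (fun r => X - C r)).prod) ≠ 0 := by
  rw [eval_msprod]
  apply Multiset.prod_ne_zero
  intro hc
  obtain ⟨r, hr, hr0⟩ := Multiset.mem_map.mp hc
  exact h r hr (by rw [sub_eq_zero] at hr0; exact hr0.symm ▸ rfl)

lemma eval_derivative_msprod (M : Multiset ℂ) (w : ℂ) (h : ∀ r ∈ M, w ≠ r) :
    eval w (derivative ((M.map (fun r => X - C r)).prod)) =
      eval w ((M.map (fun r => X - C r)).prod) * (M.map (fun r => (w - r)⁻¹)).sum := by
  induction M using Multiset.induction_on with
  | empty => simp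
  | cons a M ih =>
    have ha : w - a ≠ 0 := sub_ne_zero.mpr (h a (Multiset.mem_cons_self a M))
    have h' : ∀ r ∈ M, w ≠ r := fun r hr => h r (Multiset.mem_cons_of_mem hr)
    simp only [Multiset.map_cons, Multiset.prod_cons, Multiset.sum_cons, derivative_mul,
      derivative_sub, derivative_X, derivative_C, sub_zero, one_mul, eval_add, eval_mul,
      eval_sub, eval_X, eval_C]
    rw [ih h']
    field_simp

lemma msprod_monic (M : Multiset ℂ) : ((M.map (fun r => X - C r)).prod).Monic :=
  monic_multiset_prod_of_monic _ _ (fun r _ => monic_X_sub_C r)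

lemma msprod_natDegree (M : Multiset ℂ) : ((M.map (fun r => X - C r)).prod).natDegree = M.card := by
  have hm : ∀ f ∈ M.map (fun r => X - C r), f.Monic := by
    intro f hf
    obtain ⟨r, -, rfl⟩ := Multiset.mem_map.mp hf
    exact monic_X_sub_C r
  rw [natDegree_multiset_prod_of_monic _ hm, Multiset.map_map]
  simp [Function.comp, natDegree_X_sub_C]

lemma msprod_coeff_card (M : Multiset ℂ) : ((M.map (fun r => X - C r)).prod).coeff M.card = 1 := by
  have := (msprod_monic M).leadingCoeff
  rwa [leadingCoeff, msprod_natDegree] at this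

lemma msprod_coeff_pred (M : Multiset ℂ) (h : 0 < M.card) :
    ((M.map (fun r => X - C r)).prod).coeff (M.card - 1) = -M.sum := by
  induction M using Multiset.induction_on with
  | empty => simp at h
  | cons a M ih =>
    simp only [Multiset.map_cons, Multiset.prod_cons, Multiset.card_cons, Multiset.sum_cons,
      Nat.add_sub_cancel]
    rw [sub_mul, coeff_sub, coeff_C_mul]
    rcases Nat.eq_zero_or_pos M.card with hc | hc
    · rw [Multiset.card_eq_zero] at hc
      subst hc
      simp
    · obtain ⟨m, hm⟩ : ∃ m, M.card = m + 1 := ⟨M.card - 1, (Nat.succ_pred_eq_of_pos hc).symm⟩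
      rw [hm, coeff_X_mul]
      have h1 := ih hc
      rw [hm, Nat.add_sub_cancel] at h1
      rw [h1]
      have h2 := msprod_coeff_card M
      rw [hm] at h2
      rw [h2]
      ring
lemma laguerre (c ζ w : ℂ) (R : ℝ) (hR : 0 ≤ R) (g : Polynomial ℂ) (n : ℕ) (hn : 1 ≤ n)
    (hg0 : g ≠ 0) (hdeg : g.natDegree = n)
    (hroots : ∀ z : ℂ, g.IsRoot z → Complex.abs (z - c) ≤ R)
    (hζ : ¬ Complex.abs (ζ - c) ≤ R)
    (hw : eval w (C (n : ℂ) * g + (C ζ - X) * derivative g) = 0) :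
    Complex.abs (w - c) ≤ R := by
  by_contra hwD
  have hgw : eval w g ≠ 0 := fun h => hwD (hroots w h)
  have hsplit : g.Splits := IsAlgClosed.splits g
  set M := g.roots with hM
  have hcard : M.card = n := by rw [hM, (splits_iff_card_roots).mp hsplit, hdeg]
  have hfact : g = C g.leadingCoeff * (M.map fun a => X - C a).prod :=
    hsplit.eq_prod_roots
  have hMD : ∀ r ∈ M, Complex.abs (r - c) ≤ R := fun r hr =>
    hroots r (isRoot_of_mem_roots hr)
  have hMne : ∀ r ∈ M, w ≠ r := by
    intro r hr heq
    exact hwD (heq ▸ hMD r hr)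
  have hrel : (n : ℂ) * eval w g + (ζ - w) * eval w (derivative g) = 0 := by
    simpa using hw
  have hwζ : w ≠ ζ := by
    rintro rfl
    rw [sub_self, zero_mul, add_zero, mul_eq_zero] at hrel
    rcases hrel with h | h
    · exact Nat.cast_ne_zero.mpr (by omega) h
    · exact hgw h
  -- log derivative
  have hS : eval w (derivative g) = eval w g * (M.map fun r => (w - r)⁻¹).sum := by
    conv_lhs => rw [hfact]
    conv_rhs => rw [hfact]
    rw [derivative_C_mul]
    simp only [eval_mul, eval_C]
    rw [eval_derivative_msprod M w hMne]
    ring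
  set S : ℂ := (M.map fun r => (w - r)⁻¹).sum with hSdef
  have hu : w - ζ ≠ 0 := sub_ne_zero.mpr hwζ
  have hnS : (n : ℂ) = (w - ζ) * S := by
    have : eval w g * ((n : ℂ) - (w - ζ) * S) = 0 := by
      rw [hS] at hrel
      linear_combination hrel
    rcases mul_eq_zero.mp this with h | h
    · exact (hgw h).elim
    · linear_combination h
  -- disk geometry
  have ha : R < Complex.abs (w - c) := not_le.mp hwD
  set a : ℂ := w - c with hadef
  set K : ℝ := Complex.normSq a - R^2 with hKdef
  have hK : 0 < K := by
    have h1 : R^2 < (Complex.abs a)^2 := by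
      nlinarith [AbsoluteValue.nonneg Complex.abs a]
    rw [Complex.sq_abs] at h1
    rw [hKdef]; linarith
  -- each inverted point in disk
  have hinv : ∀ r ∈ M, Complex.abs ((w - r)⁻¹ - (starRingEnd ℂ) a / (K : ℂ)) ≤ R / K := by
    intro r hr
    have hvne : w - r ≠ 0 := sub_ne_zero.mpr (hMne r hr)
    have h1 : Complex.abs ((w - r) - a) ≤ R := by
      have : (w - r) - a = -(r - c) := by rw [hadef]; ring
      rw [this, map_neg_eq_map]
      exact hMD r hr
    rw [inv_form K hK a _ hvne R]
    exact ((abs_inv_disk_core a (w - r) R hR ha hvne).mp h1)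
  -- sum bound
  have hsum : Complex.abs (S - (n : ℂ) * ((starRingEnd ℂ) a / (K : ℂ))) ≤ n * (R / K) := by
    have e1 : S - (n : ℂ) * ((starRingEnd ℂ) a / (K : ℂ)) =
        (M.map fun r => (w - r)⁻¹ - (starRingEnd ℂ) a / (K : ℂ)).sum := by
      rw [Multiset.sum_map_sub, hSdef]
      congr 1
      rw [Multiset.map_const', Multiset.sum_replicate, hcard, nsmul_eq_mul]
    rw [e1]
    calc Complex.abs ((M.map fun r => (w - r)⁻¹ - (starRingEnd ℂ) a / (K : ℂ)).sum)
        ≤ ((M.map fun r => (w - r)⁻¹ - (starRingEnd ℂ) a / (K : ℂ)).map Complex.abs).sum := by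
          simpa [← Complex.norm_eq_abs, Function.comp_def] using norm_multiset_sum_le
            (M.map fun r => (w - r)⁻¹ - (starRingEnd ℂ) a / (K : ℂ))
      _ ≤ ((M.map fun r => (w - r)⁻¹ - (starRingEnd ℂ) a / (K : ℂ)).map fun _ => R / K).sum := by
          apply Multiset.sum_map_le_sum_map
          intro z hz
          obtain ⟨r, hr, rfl⟩ := Multiset.mem_map.mp hz
          exact hinv r hr
      _ = n * (R / K) := by
          rw [Multiset.map_const', Multiset.card_map, Multiset.sum_replicate, hcard,
            nsmul_eq_mul]
  have hn0 : (n : ℂ) ≠ 0 := Nat.cast_ne_zero.mpr (by omega)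
  have hSeq : (w - ζ)⁻¹ * (n : ℂ) = S := by
    rw [hnS, ← mul_assoc, inv_mul_cancel₀ hu, one_mul]
  have h2 : Complex.abs ((w - ζ)⁻¹ - (starRingEnd ℂ) a / (K : ℂ)) ≤ R / K := by
    have e2 : (w - ζ)⁻¹ - (starRingEnd ℂ) a / (K : ℂ)
        = ((n : ℂ))⁻¹ * (S - (n : ℂ) * ((starRingEnd ℂ) a / (K : ℂ))) := by
      rw [← hSeq]
      field_simp
    rw [e2, map_mul, map_inv₀]
    have habsn : Complex.abs ((n : ℂ)) = (n : ℝ) := by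
      rw [Complex.abs_natCast]
    rw [habsn]
    have hnpos : (0 : ℝ) < n := by exact_mod_cast (by omega : 0 < n)
    calc (n : ℝ)⁻¹ * Complex.abs (S - (n : ℂ) * ((starRingEnd ℂ) a / (K : ℂ)))
        ≤ (n : ℝ)⁻¹ * (n * (R / K)) := by
          exact mul_le_mul_of_nonneg_left hsum (by positivity)
      _ = R / K := by field_simp
  have h3 : Complex.abs ((w - ζ) - a) ≤ R := by
    rw [abs_inv_disk_core a (w - ζ) R hR ha hu]
    rw [← inv_form K hK a (w - ζ) hu R]
    exact h2
  have h4 : (w - ζ) - a = c - ζ := by rw [hadef]; ring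
  rw [h4] at h3
  exact hζ (by rwa [AbsoluteValue.map_sub] at h3)

lemma grace : ∀ (n : ℕ) (f g : Polynomial ℂ) (c : ℂ) (R : ℝ), 0 ≤ R →
    f.natDegree ≤ n → g.natDegree ≤ n → f.coeff n ≠ 0 → g.coeff n ≠ 0 →
    (∀ z : ℂ, g.IsRoot z → Complex.abs (z - c) ≤ R) →
    (∀ z : ℂ, f.IsRoot z → ¬ Complex.abs (z - c) ≤ R) →
    (∑ k ∈ Finset.range (n+1), (-1 : ℂ)^k * (k.factorial : ℂ) * ((n-k).factorial : ℂ) *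
      f.coeff k * g.coeff (n-k)) ≠ 0 := by
  intro n
  induction n with
  | zero =>
    intro f g c R hR hfd hgd hfc hgc hgD hfD
    simpa using mul_ne_zero hfc hgc
  | succ n IH =>
    intro f g c R hR hfd hgd hfc hgc hgD hfD
    have hf0 : f ≠ 0 := fun h => hfc (by simp [h])
    have hg0 : g ≠ 0 := fun h => hgc (by simp [h])
    have hdf : f.natDegree = n + 1 := le_antisymm hfd (le_natDegree_of_ne_zero hfc)
    have hdg : g.natDegree = n + 1 := le_antisymm hgd (le_natDegree_of_ne_zero hgc)
    -- root of f
    obtain ⟨ζ, hζroot⟩ : ∃ z, f.IsRoot z := by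
      apply Complex.exists_root
      rw [degree_eq_natDegree hf0, hdf]
      exact_mod_cast Nat.succ_pos n
    have hζD : ¬ Complex.abs (ζ - c) ≤ R := hfD ζ hζroot
    obtain ⟨f₁, hf₁⟩ : (X - C ζ) ∣ f := dvd_iff_isRoot.mpr hζroot
    have hf₁0 : f₁ ≠ 0 := fun h => hf0 (by rw [hf₁, h, mul_zero])
    have hdf₁ : f₁.natDegree = n := by
      have := natDegree_mul (X_sub_C_ne_zero ζ) hf₁0
      rw [← hf₁, hdf, natDegree_X_sub_C] at this
      omega
    have hcoeff : ∀ k, f.coeff k = (X * f₁).coeff k - ζ * f₁.coeff k := by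
      intro k
      rw [hf₁]
      rw [sub_mul, coeff_sub, coeff_C_mul]
    -- the polar derivative
    set gt : Polynomial ℂ := C ((n : ℂ) + 1) * g + (C ζ - X) * derivative g with hgt
    have hgtcoeff : ∀ j : ℕ, gt.coeff j =
        ((n : ℂ) + 1 - (j : ℂ)) * g.coeff j + ζ * ((j : ℂ) + 1) * g.coeff (j+1) := by
      intro j
      rw [hgt]
      simp only [coeff_add, coeff_C_mul, sub_mul, coeff_sub]
      rcases j with _ | i
      · simp [coeff_derivative]
      · rw [coeff_X_mul, coeff_derivative, coeff_derivative]
        push_cast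
        ring
    have hgtdeg : gt.natDegree ≤ n := by
      rw [natDegree_le_iff_coeff_eq_zero]
      intro m hm
      rw [hgtcoeff]
      have h1 : g.coeff (m + 1) = 0 :=
        coeff_eq_zero_of_natDegree_lt (by omega)
      rcases eq_or_lt_of_le (Nat.succ_le_of_lt hm) with h | h
      · rw [h1, ← h]
        push_cast
        ring
      · have h2 : g.coeff m = 0 := coeff_eq_zero_of_natDegree_lt (by omega)
        rw [h1, h2]
        ring
    -- roots of g
    have hsplitg : g.Splits := IsAlgClosed.splits g
    have hcardg : g.roots.card = n + 1 := by
      rw [(splits_iff_card_roots).mp hsplitg, hdg]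
    have hgtn : gt.coeff n ≠ 0 := by
      rw [hgtcoeff]
      have e1 : ((n : ℂ) + 1 - (n : ℂ)) = 1 := by ring
      rw [e1, one_mul]
      intro hzero
      -- centroid argument
      have hfact : g = C g.leadingCoeff * (g.roots.map fun a => X - C a).prod :=
        hsplitg.eq_prod_roots
      have hlc : g.coeff (n+1) = g.leadingCoeff := by
        rw [leadingCoeff, hdg]
      have hcn : g.coeff n = g.leadingCoeff * (-(g.roots.sum)) := by
        conv_lhs => rw [hfact]
        rw [coeff_C_mul]
        have h6 := msprod_coeff_pred g.roots (by rw [hcardg]; omega)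
        rw [hcardg, Nat.add_sub_cancel] at h6
        rw [h6]
      have hlc0 : g.leadingCoeff ≠ 0 := leadingCoeff_ne_zero.mpr hg0
      rw [hcn, hlc] at hzero
      have hζval : ((n : ℂ) + 1) * ζ = g.roots.sum := by
        have h5 : g.leadingCoeff * (-(g.roots.sum) + ζ * ((n:ℂ)+1)) = 0 := by
          linear_combination hzero
        rcases mul_eq_zero.mp h5 with h | h
        · exact (hlc0 h).elim
        · linear_combination h
      -- bound
      have hbound : Complex.abs (((n : ℂ) + 1) * (ζ - c)) ≤ (n + 1) * R := by
        have e2 : ((n : ℂ) + 1) * (ζ - c) = (g.roots.map (fun r => r - c)).sum := by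
          rw [Multiset.sum_map_sub]
          simp only [Multiset.map_id']
          rw [Multiset.map_const', Multiset.sum_replicate, hcardg]
          rw [mul_sub, hζval]
          push_cast
          ring
        rw [e2]
        calc Complex.abs ((g.roots.map (fun r => r - c)).sum)
            ≤ ((g.roots.map (fun r => r - c)).map Complex.abs).sum := by
              simpa [← Complex.norm_eq_abs, Function.comp_def] using
                norm_multiset_sum_le (g.roots.map (fun r => r - c))
          _ ≤ ((g.roots.map (fun r => r - c)).map fun _ => R).sum := by
              apply Multiset.sum_map_le_sum_map
              intro z hz
              obtain ⟨r, hr, rfl⟩ := Multiset.mem_map.mp hz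
              exact hgD r (isRoot_of_mem_roots hr)
          _ = (n + 1) * R := by
              rw [Multiset.map_const', Multiset.card_map, Multiset.sum_replicate, hcardg,
                nsmul_eq_mul]
              push_cast
              ring
      rw [map_mul] at hbound
      have e3 : Complex.abs ((n : ℂ) + 1) = (n : ℝ) + 1 := by
        have : ((n : ℂ) + 1) = ((n + 1 : ℕ) : ℂ) := by push_cast; ring
        rw [this, Complex.abs_natCast]
        push_cast
        ring
      rw [e3] at hbound
      have : Complex.abs (ζ - c) ≤ R := by
        have hpos : (0 : ℝ) < (n : ℝ) + 1 := by positivity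
        nlinarith [AbsoluteValue.nonneg Complex.abs (ζ - c)]
      exact hζD this
    have hgt0 : gt ≠ 0 := fun h => hgtn (by simp [h])
    -- roots of gt in disk
    have hgtroots : ∀ z : ℂ, gt.IsRoot z → Complex.abs (z - c) ≤ R := by
      intro z hz
      apply laguerre c ζ z R hR g (n+1) (by omega) hg0 hdg hgD hζD
      have : ((n + 1 : ℕ) : ℂ) = (n : ℂ) + 1 := by push_cast; ring
      rw [this]
      exact hz
    -- f₁ facts
    have hf₁c : f₁.coeff n ≠ 0 := by
      have := hcoeff (n+1)
      rw [coeff_X_mul, coeff_eq_zero_of_natDegree_lt (by omega : f₁.natDegree < n + 1)] at this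
      rw [mul_zero, sub_zero] at this
      rw [← this]
      exact hfc
    have hf₁roots : ∀ z : ℂ, f₁.IsRoot z → ¬ Complex.abs (z - c) ≤ R := by
      intro z hz
      apply hfD
      rw [IsRoot, hf₁, eval_mul, hz, mul_zero]
    -- the key identity
    have key : (∑ k ∈ Finset.range (n+1+1), (-1 : ℂ)^k * (k.factorial : ℂ) *
          (((n+1-k).factorial : ℂ)) * f.coeff k * g.coeff (n+1-k))
        = -(∑ j ∈ Finset.range (n+1), (-1 : ℂ)^j * (j.factorial : ℂ) * ((n-j).factorial : ℂ) *
          f₁.coeff j * gt.coeff (n-j)) := by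
      have hstep1 : ∀ k ∈ Finset.range (n+2),
          (-1 : ℂ)^k * (k.factorial : ℂ) * ((n+1-k).factorial : ℂ) * f.coeff k * g.coeff (n+1-k)
          = (-1 : ℂ)^k * (k.factorial : ℂ) * ((n+1-k).factorial : ℂ) * (X*f₁).coeff k *
              g.coeff (n+1-k)
            - ζ * ((-1 : ℂ)^k * (k.factorial : ℂ) * ((n+1-k).factorial : ℂ) * f₁.coeff k *
              g.coeff (n+1-k)) := by
        intro k _
        rw [hcoeff k]
        ring
      rw [Finset.sum_congr rfl hstep1, Finset.sum_sub_distrib]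
      have hS1 : (∑ k ∈ Finset.range (n+2), (-1 : ℂ)^k * (k.factorial : ℂ) *
            ((n+1-k).factorial : ℂ) * (X*f₁).coeff k * g.coeff (n+1-k))
          = ∑ j ∈ Finset.range (n+1), (-1 : ℂ)^(j+1) * ((j+1).factorial : ℂ) *
            ((n-j).factorial : ℂ) * f₁.coeff j * g.coeff (n-j) := by
        rw [Finset.sum_range_succ']
        have h0 : (X * f₁).coeff 0 = 0 := by
          rw [mul_coeff_zero, coeff_X_zero, zero_mul]
        rw [h0, mul_zero, zero_mul, add_zero]
        apply Finset.sum_congr rfl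
        intro j hj
        rw [coeff_X_mul]
        have e : n + 1 - (j+1) = n - j := by omega
        rw [e]
      have hS2 : (∑ k ∈ Finset.range (n+2), ζ * ((-1 : ℂ)^k * (k.factorial : ℂ) *
            ((n+1-k).factorial : ℂ) * f₁.coeff k * g.coeff (n+1-k)))
          = ∑ j ∈ Finset.range (n+1), ζ * ((-1 : ℂ)^j * (j.factorial : ℂ) *
            ((n+1-j).factorial : ℂ) * f₁.coeff j * g.coeff (n+1-j)) := by
        rw [Finset.sum_range_succ]
        rw [coeff_eq_zero_of_natDegree_lt (show f₁.natDegree < n+1 by omega)]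
        ring
      rw [hS1, hS2, ← Finset.sum_sub_distrib, ← Finset.sum_neg_distrib]
      apply Finset.sum_congr rfl
      intro j hj
      have hjn : j ≤ n := by
        simp only [Finset.mem_range] at hj
        omega
      rw [hgtcoeff (n - j)]
      have c1 : ((n - j : ℕ) : ℂ) = (n : ℂ) - (j : ℂ) := by
        push_cast [Nat.cast_sub hjn]
        ring
      have c2 : (n - j) + 1 = n + 1 - j := by omega
      have c3 : ((j+1).factorial : ℂ) = ((j : ℂ) + 1) * (j.factorial : ℂ) := by
        rw [Nat.factorial_succ]
        push_cast
        ring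
      have c4 : ((n + 1 - j).factorial : ℂ) = (((n - j : ℕ) : ℂ) + 1) * ((n-j).factorial : ℂ) := by
        rw [← c2, Nat.factorial_succ]
        push_cast
        ring
      rw [c2, c1, c3, c4, c1, pow_succ]
      ring
    rw [key]
    exact neg_ne_zero.mpr (IH f₁ gt c R hR (le_of_eq hdf₁) hgtdeg hf₁c hgtn hgtroots hf₁roots)
lemma binform (γn : ℂ) (M : Multiset ℂ) (q : Polynomial ℂ) (n : ℕ)
    (hq : q = C γn * (M.map fun r => X - C r).prod) (hγn : γn ≠ 0)
    (hcard : M.card = n) (u v : ℂ) :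
    ∑ k ∈ Finset.range (n+1), q.coeff k * u^k * v^(n-k)
      = γn * (M.map fun r => u - r * v).prod := by
  have hqdeg : q.natDegree = n := by
    rw [hq, natDegree_C_mul hγn]
    have hm : ∀ f ∈ M.map (fun r => X - C r), Monic f := by
      intro f hf
      obtain ⟨r, -, rfl⟩ := Multiset.mem_map.mp hf
      exact monic_X_sub_C r
    rw [natDegree_multiset_prod_of_monic _ hm, Multiset.map_map]
    simp [Function.comp, natDegree_X_sub_C, hcard]
  rcases eq_or_ne v 0 with rfl | hv
  · rw [Finset.sum_eq_single n]
    · have hcq : q.coeff n = γn := by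
        rw [hq, coeff_C_mul, ← hcard, msprod_coeff_card, mul_one]
      rw [hcq, Nat.sub_self, pow_zero, mul_one]
      have : (M.map fun r => u - r * 0).prod = u ^ n := by
        have : (M.map fun r => u - r * 0) = M.map (fun _ => u) := by
          apply Multiset.map_congr rfl
          intro r _
          ring
        rw [this, Multiset.map_const', Multiset.prod_replicate, hcard]
      rw [this]
    · intro k hk hkn
      have hklt : k < n := by
        simp only [Finset.mem_range] at hk
        omega
      rw [zero_pow (by omega : n - k ≠ 0), mul_zero]
    · intro h
      exact absurd (Finset.self_mem_range_succ n) h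
  · have heval : eval (u/v) q = γn * (M.map fun r => u/v - r).prod := by
    
      rw [hq, eval_mul, eval_C, eval_msprod]
    have hsum : eval (u/v) q = ∑ k ∈ Finset.range (n+1), q.coeff k * (u/v)^k := by
      rw [eval_eq_sum_range' (by omega : q.natDegree < n + 1)]
    have hmain : v^n * eval (u/v) q = ∑ k ∈ Finset.range (n+1), q.coeff k * u^k * v^(n-k) := by
      rw [hsum, Finset.mul_sum]
      apply Finset.sum_congr rfl
      intro k hk
      have hkn : k ≤ n := by
        simp only [Finset.mem_range] at hk
        omega
      rw [div_pow, ← pow_sub_mul_pow v hkn]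
      field_simp
    rw [← hmain, heval]
    rw [show v^n = (M.map fun r => v).prod by
      rw [Multiset.map_const', Multiset.prod_replicate, hcard]]
    rw [← mul_assoc, mul_comm _ γn, mul_assoc, ← Multiset.prod_map_mul]
    congr 1
    congr 1
    apply Multiset.map_congr rfl
    intro r _
    field_simp

lemma swap_identity (n : ℕ) (γ : ℕ → ℂ) (t s w x : ℂ) :
    ∑ k ∈ Finset.range (n+1), (n.choose k : ℂ) *
        (∑ m ∈ Finset.range (k+1), (k.choose m : ℂ) * γ m * t^m * s^(k-m)) * w^k * x^(n-k)
      = ∑ m ∈ Finset.range (n+1), (n.choose m : ℂ) * γ m * (t*w)^m * (x + s*w)^(n-m) := by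
  -- expand to double sum over full square
  have step1 : ∀ k ∈ Finset.range (n+1),
      (n.choose k : ℂ) * (∑ m ∈ Finset.range (k+1), (k.choose m : ℂ) * γ m * t^m * s^(k-m)) *
        w^k * x^(n-k)
      = ∑ m ∈ Finset.range (n+1),
          (n.choose k : ℂ) * (k.choose m : ℂ) * γ m * t^m * s^(k-m) * w^k * x^(n-k) := by
    intro k hk
    have hkn : k + 1 ≤ n + 1 := by
      simp only [Finset.mem_range] at hk
      omega
    rw [Finset.mul_sum, Finset.sum_mul, Finset.sum_mul]
    rw [← Finset.sum_subset (Finset.range_subset_range.mpr hkn)]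
    · apply Finset.sum_congr rfl
      intro m _
      ring
    · intro m _ hm
      have : k < m := by
        simp only [Finset.mem_range] at hm ⊢
        omega
      rw [Nat.choose_eq_zero_of_lt this]
      push_cast
      ring
  rw [Finset.sum_congr rfl step1, Finset.sum_comm]
  apply Finset.sum_congr rfl
  intro m hm
  have hmn : m ≤ n := by
    simp only [Finset.mem_range] at hm
    omega
  -- inner sum over k; zero for k < m
  have step2 : ∑ k ∈ Finset.range (n+1),
      (n.choose k : ℂ) * (k.choose m : ℂ) * γ m * t^m * s^(k-m) * w^k * x^(n-k)
      = ∑ l ∈ Finset.range (n-m+1),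
        (n.choose (m+l) : ℂ) * ((m+l).choose m : ℂ) * γ m * t^m * s^l * w^(m+l) * x^(n-(m+l)) := by
    rw [Finset.range_eq_Ico, ← Finset.sum_Ico_consecutive _ (Nat.zero_le m) (by omega : m ≤ n+1)]
    have hz : ∑ k ∈ Finset.Ico 0 m,
        (n.choose k : ℂ) * (k.choose m : ℂ) * γ m * t^m * s^(k-m) * w^k * x^(n-k) = 0 := by
      apply Finset.sum_eq_zero
      intro k hk
      have : k < m := by
        simp only [Finset.mem_Ico] at hk
        omega
      rw [Nat.choose_eq_zero_of_lt this]
      push_cast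
      ring
    rw [hz, zero_add, Finset.sum_Ico_eq_sum_range]
    have hr : n + 1 - m = n - m + 1 := by omega
    rw [hr]
    apply Finset.sum_congr rfl
    intro l hl
    have he : m + l - m = l := by omega
    rw [he]
  rw [step2]
  -- now use choose_mul and add_pow
  have step3 : ∀ l ∈ Finset.range (n-m+1),
      (n.choose (m+l) : ℂ) * ((m+l).choose m : ℂ) * γ m * t^m * s^l * w^(m+l) * x^(n-(m+l))
      = (n.choose m : ℂ) * γ m * (t*w)^m * (((s*w)^l * x^((n-m)-l) * ((n-m).choose l : ℂ))) := by
    intro l hl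
    have hln : l ≤ n - m := by
      simp only [Finset.mem_range] at hl
      omega
    have hch := Nat.choose_mul (n := n) (show m ≤ m + l by omega)
    have hch' : ((n.choose (m+l) : ℕ) : ℂ) * (((m+l).choose m : ℕ) : ℂ)
        = ((n.choose m : ℕ) : ℂ) * (((n-m).choose l : ℕ) : ℂ) := by
      rw [← Nat.cast_mul, ← Nat.cast_mul, hch]
      congr 3
      omega
    calc (n.choose (m+l) : ℂ) * ((m+l).choose m : ℂ) * γ m * t^m * s^l * w^(m+l) * x^(n-(m+l))
        = ((n.choose (m+l) : ℂ) * ((m+l).choose m : ℂ)) * (γ m * t^m * s^l * w^(m+l) * x^(n-(m+l))) := by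
          ring
      _ = ((n.choose m : ℂ) * ((n-m).choose l : ℂ)) * (γ m * t^m * s^l * w^(m+l) * x^(n-(m+l))) := by
          rw [hch']
      _ = (n.choose m : ℂ) * γ m * (t*w)^m * (((s*w)^l * x^((n-m)-l) * ((n-m).choose l : ℂ))) := by
          rw [show n-(m+l) = (n-m)-l by omega, pow_add, mul_pow, mul_pow]
          ring
  rw [Finset.sum_congr rfl step3, ← Finset.mul_sum]
  rw [show x + s*w = s*w + x by ring, add_pow]

-- generic coefficient extraction
lemma coeff_sum_C_mul_X_pow {R : Type*} [Semiring R] (c : ℕ → R) (n k : ℕ) :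
    (∑ j ∈ Finset.range (n+1), Polynomial.C (c j) * Polynomial.X^j).coeff k
      = if k ≤ n then c k else 0 := by
  rw [finset_sum_coeff]
  simp only [coeff_C_mul, coeff_X_pow, mul_ite, mul_one, mul_zero]
  rw [Finset.sum_ite_eq]
  simp [Nat.lt_succ_iff]

lemma applySeq_coeff (γ : ℕ → ℝ) (p : Polynomial ℝ) (k : ℕ) :
    (applySeq γ p).coeff k = if k ≤ p.natDegree then γ k * p.coeff k else 0 :=
  coeff_sum_C_mul_X_pow _ _ _

lemma applySeq_natDegree_le (γ : ℕ → ℝ) (p : Polynomial ℝ) :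
    (applySeq γ p).natDegree ≤ p.natDegree := by
  rw [natDegree_le_iff_coeff_eq_zero]
  intro m hm
  rw [applySeq_coeff, if_neg (by omega)]

lemma aeval_applySeq (γ : ℕ → ℝ) (p : Polynomial ℝ) (z : ℂ) :
    Polynomial.aeval z (applySeq γ p)
      = ∑ k ∈ Finset.range (p.natDegree + 1), (γ k : ℂ) * (p.coeff k : ℂ) * z^k := by
  rw [applySeq, map_sum]
  apply Finset.sum_congr rfl
  intro k _
  rw [map_mul, map_pow, aeval_X, aeval_C]
  simp only [Complex.coe_algebraMap]
  push_cast
  ring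

end DeformedMS

set_option maxHeartbeats 2000000 in
open Polynomial Finset DeformedMS in
theorem deformed_sequence_is_ms (γ : ℕ → ℝ) (hγ0 : ∀ k, 0 ≤ γ k)
    (hγ : IsMultiplierSequence γ) (t : ℝ) (ht : t ∈ Set.Icc (0 : ℝ) 1) :
    IsMultiplierSequence (fun k => ∑ j ∈ Finset.range (k + 1),
      (k.choose j : ℝ) * (1 - t) ^ j * γ (k - j) * t ^ (k - j)) := by
  obtain ⟨ht0, ht1⟩ := ht
  set B : ℕ → ℝ := fun k => ∑ j ∈ Finset.range (k + 1),
      (k.choose j : ℝ) * (1 - t) ^ j * γ (k - j) * t ^ (k - j) with hB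
  intro p hp z₀ hz₀
  by_contra him
  -- γ is strictly positive
  have hγpos : ∀ k, 0 < γ k := by
    intro k
    rcases (hγ0 k).lt_or_eq with h | h
    · exact h
    · exfalso
      have hXk : RealRooted (X ^ k : Polynomial ℝ) := by
        intro w hw
        rw [map_pow, aeval_X] at hw
        rcases Nat.eq_zero_or_pos k with rfl | hk
        · norm_num at hw
        · rw [pow_eq_zero_iff (by omega : k ≠ 0)] at hw
          rw [hw]
          rfl
      have h2 := hγ _ hXk
      have h3 : Polynomial.aeval Complex.I (applySeq γ (X ^ k : Polynomial ℝ)) = 0 := by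
        rw [aeval_applySeq]
        apply Finset.sum_eq_zero
        intro j _
        rw [coeff_X_pow]
        rcases eq_or_ne j k with rfl | hjk
        · rw [← h]
          simp
        · rw [if_neg hjk]
          simp
      have h4 := h2 Complex.I h3
      rw [Complex.I_im] at h4
      norm_num at h4
  have hB0 : B 0 = γ 0 := by
    rw [hB]
    norm_num
  have hBalt : ∀ k, B k = ∑ m ∈ Finset.range (k+1),
      (k.choose m : ℝ) * γ m * t^m * (1-t)^(k-m) := by
    intro k
    rw [hB]
    rw [← Finset.sum_range_reflect]
    apply Finset.sum_congr rfl
    intro m hm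
    have hmk : m ≤ k := by
      simp only [Finset.mem_range] at hm
      omega
    rw [show k + 1 - 1 - m = k - m from by omega]
    rw [Nat.choose_symm hmk, show k - (k - m) = m from by omega]
    ring
  clear_value B
  have hp0 : p ≠ 0 := by
    intro h
    have := hp Complex.I (by rw [h]; simp)
    rw [Complex.I_im] at this
    norm_num at this
  set n := p.natDegree with hn
  have hpn : p.coeff n ≠ 0 := by
    rw [hn, ← leadingCoeff]
    exact leadingCoeff_ne_zero.mpr hp0
  rcases Nat.eq_zero_or_pos n with hn0 | hn1
  · -- degree-zero case
    rw [aeval_applySeq, ← hn, hn0] at hz₀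
    simp only [zero_add, Finset.range_one, Finset.sum_singleton, pow_zero, mul_one] at hz₀
    rcases mul_eq_zero.mp hz₀ with h | h
    · rw [Complex.ofReal_eq_zero] at h
      rw [hB0] at h
      exact (hγpos 0).ne' h
    · rw [Complex.ofReal_eq_zero] at h
      rw [hn0] at hpn
      exact hpn h
  · -- positive degree
    -- pick a root with positive imaginary part
    obtain ⟨z, hzim, hzval⟩ : ∃ z : ℂ, 0 < z.im ∧ Polynomial.aeval z (applySeq B p) = 0 := by
      rcases lt_or_gt_of_ne him with hneg | hpos
      · refine ⟨(starRingEnd ℂ) z₀, ?_, ?_⟩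
        · rw [Complex.conj_im]
          linarith
        · rw [Polynomial.aeval_conj, hz₀, map_zero]
      · exact ⟨z₀, hpos, hz₀⟩
    -- the γ-symbol polynomial
    have hXn : ((X + 1 : Polynomial ℝ) ^ n).natDegree = n := by
      rw [natDegree_pow, show (X + 1 : Polynomial ℝ) = X + C 1 from by rw [map_one],
        natDegree_X_add_C, mul_one]
    have hRRXn : RealRooted ((X + 1 : Polynomial ℝ) ^ n) := by
      intro w hw
      rw [map_pow, map_add, aeval_X, map_one, pow_eq_zero_iff (by omega : n ≠ 0)] at hw
      have hw1 : w = -1 := by linear_combination hw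
      rw [hw1]
      simp
    set gs : Polynomial ℝ := applySeq γ ((X + 1 : Polynomial ℝ) ^ n) with hgsdef
    have hgs : RealRooted gs := hγ _ hRRXn
    have hgscoeff : ∀ k, gs.coeff k = if k ≤ n then γ k * (n.choose k : ℝ) else 0 := by
      intro k
      rw [hgsdef, applySeq_coeff, hXn, coeff_X_add_one_pow]
    have hgsn : gs.coeff n = γ n := by
      rw [hgscoeff, if_pos le_rfl, Nat.choose_self]
      norm_num
    have hgsdeg : gs.natDegree = n := by
      apply le_antisymm
      · exact hXn ▸ applySeq_natDegree_le γ _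
      · apply le_natDegree_of_ne_zero
        rw [hgsn]
        exact (hγpos n).ne'
    set gC : Polynomial ℂ := gs.map (algebraMap ℝ ℂ) with hgC
    have hgs0 : gs ≠ 0 := by
      intro h
      rw [h, coeff_zero] at hgsn
      exact (hγpos n).ne' hgsn.symm
    have hgC0 : gC ≠ 0 := by
      rw [hgC, Polynomial.map_ne_zero_iff (algebraMap ℝ ℂ).injective]
      exact hgs0
    have hgCdeg : gC.natDegree = n := by
      rw [hgC, natDegree_map_eq_of_injective (algebraMap ℝ ℂ).injective, hgsdeg]
    have hgClead : gC.leadingCoeff = (γ n : ℂ) := by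
      rw [leadingCoeff, hgCdeg, hgC, coeff_map, hgsn]
      rfl
    set M : Multiset ℂ := gC.roots with hM
    have hMcard : M.card = n := by
      rw [hM, (splits_iff_card_roots).mp (IsAlgClosed.splits gC), hgCdeg]
    have hfact : gC = C ((γ n : ℝ) : ℂ) * (M.map fun r => X - C r).prod := by
      have := (IsAlgClosed.splits gC).eq_prod_roots
      rwa [hgClead] at this
    have hγnC : ((γ n : ℝ) : ℂ) ≠ 0 := by
      rw [Complex.ofReal_ne_zero]
      exact (hγpos n).ne'
    -- roots of the symbol are negative reals
    have hMneg : ∀ r ∈ M, r.im = 0 ∧ r.re < 0 := by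
      intro r hr
      have hroot : Polynomial.aeval r gs = 0 := by
        have hr' : r ∈ gC.roots := hM ▸ hr
        have h1 : eval r gC = 0 := isRoot_of_mem_roots hr'
        rwa [hgC, eval_map, ← aeval_def] at h1
      have him0 : r.im = 0 := hgs r hroot
      refine ⟨him0, ?_⟩
      by_contra hre
      push_neg at hre
      have hrre : r = ((r.re : ℝ) : ℂ) := Complex.ext rfl (by rw [him0, Complex.ofReal_im])
      have hev : Polynomial.eval r.re gs = 0 := by
        have h2 : eval ((r.re : ℝ) : ℂ) gC = algebraMap ℝ ℂ (Polynomial.eval r.re gs) := by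
          rw [hgC, eval_map]
          exact Polynomial.eval₂_at_apply (algebraMap ℝ ℂ) r.re
        rw [← hrre, Complex.coe_algebraMap] at h2
        have h3 : eval r gC = 0 := isRoot_of_mem_roots (hM ▸ hr)
        rw [h3] at h2
        exact_mod_cast h2.symm
      have hpos : 0 < Polynomial.eval r.re gs := by
        have he : Polynomial.eval r.re gs
            = ∑ k ∈ Finset.range (n+1), γ k * (n.choose k : ℝ) * r.re^k := by
          rw [hgsdef, applySeq, eval_finset_sum, hXn]
          apply Finset.sum_congr rfl
          intro k _
          rw [eval_mul, eval_pow, eval_C, eval_X, coeff_X_add_one_pow]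
        rw [he]
        apply Finset.sum_pos'
        · intro k _
          have := hγpos k
          positivity
        · refine ⟨0, Finset.mem_range.mpr (by omega), ?_⟩
          simpa using hγpos 0
      rw [hev] at hpos
      exact lt_irrefl 0 hpos
    clear_value gs gC M
    -- the apolar polynomial G
    set Gpoly : Polynomial ℂ := ∑ j ∈ Finset.range (n+1),
        C ((n.choose j : ℂ) * ((B (n-j) : ℝ) : ℂ) * (-z)^(n-j)) * X^j with hG
    have hGcoeff : ∀ k, Gpoly.coeff k
        = if k ≤ n then (n.choose k : ℂ) * ((B (n-k) : ℝ) : ℂ) * (-z)^(n-k) else 0 := by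
      intro k
      rw [hG]
      exact coeff_sum_C_mul_X_pow _ _ _
    have hGn : Gpoly.coeff n = ((γ 0 : ℝ) : ℂ) := by
      rw [hGcoeff, if_pos le_rfl, Nat.choose_self, Nat.sub_self, pow_zero, hB0]
      norm_num
    have hγ0C : ((γ 0 : ℝ) : ℂ) ≠ 0 := by
      rw [Complex.ofReal_ne_zero]
      exact (hγpos 0).ne'
    have hG0 : Gpoly ≠ 0 := by
      intro h
      rw [h, coeff_zero] at hGn
      exact hγ0C hGn.symm
    have hGdeg : Gpoly.natDegree = n := by
      apply le_antisymm
      · rw [natDegree_le_iff_coeff_eq_zero]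
        intro m hm
        rw [hGcoeff, if_neg (by omega)]
      · exact le_natDegree_of_ne_zero (by rw [hGn]; exact hγ0C)
    clear_value Gpoly
    set pC : Polynomial ℂ := p.map (algebraMap ℝ ℂ) with hpC
    have hpCdeg : pC.natDegree = n := by
      rw [hpC, natDegree_map_eq_of_injective (algebraMap ℝ ℂ).injective, hn]
    have hpCn : pC.coeff n ≠ 0 := by
      rw [hpC, coeff_map, Complex.coe_algebraMap]
      intro h
      exact hpn (by exact_mod_cast h)
    clear_value pC
    -- apolarity
    have hz2 : ∑ k ∈ Finset.range (n+1), ((B k : ℝ) : ℂ) * ((p.coeff k : ℝ) : ℂ) * z^k = 0 := by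
      rw [hn, ← aeval_applySeq]
      exact hzval
    have hApolar : (∑ k ∈ Finset.range (n+1), (-1 : ℂ)^k * (k.factorial : ℂ) *
        ((n-k).factorial : ℂ) * pC.coeff k * Gpoly.coeff (n-k)) = 0 := by
      have hterm : ∀ k ∈ Finset.range (n+1), (-1 : ℂ)^k * (k.factorial : ℂ) *
          ((n-k).factorial : ℂ) * pC.coeff k * Gpoly.coeff (n-k)
          = (n.factorial : ℂ) * (((B k : ℝ) : ℂ) * ((p.coeff k : ℝ) : ℂ) * z^k) := by
        intro k hk
        have hkn : k ≤ n := by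
          simp only [Finset.mem_range] at hk
          omega
        rw [hGcoeff, if_pos (Nat.sub_le n k), Nat.choose_symm hkn,
          show n - (n - k) = k from by omega]
        rw [hpC, coeff_map]
        have hsign : ((-1 : ℂ))^k * ((-1 : ℂ))^k = 1 := by
          rw [← pow_add, ← two_mul, pow_mul]
          norm_num
        have hfac : ((k.factorial : ℂ)) * ((n-k).factorial : ℂ) * (n.choose k : ℂ)
            = (n.factorial : ℂ) := by
          have h9 := Nat.choose_mul_factorial_mul_factorial hkn
          push_cast [← h9]
          ring
        calc (-1 : ℂ)^k * (k.factorial : ℂ) * ((n-k).factorial : ℂ) *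
              (algebraMap ℝ ℂ (p.coeff k)) * ((n.choose k : ℂ) * ((B k : ℝ) : ℂ) * (-z)^k)
            = ((k.factorial : ℂ) * ((n-k).factorial : ℂ) * (n.choose k : ℂ)) *
              (((B k : ℝ) : ℂ) * (algebraMap ℝ ℂ (p.coeff k)) * z^k) *
              ((-1 : ℂ)^k * (-1 : ℂ)^k) := by
              rw [neg_pow]
              ring
          _ = (n.factorial : ℂ) * (((B k : ℝ) : ℂ) * ((p.coeff k : ℝ) : ℂ) * z^k) := by
              rw [hsign, hfac, mul_one]
              rfl
      rw [Finset.sum_congr rfl hterm, ← Finset.mul_sum, hz2, mul_zero]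
    -- roots of G lie on the positive ray through z
    have hGroots : ∀ w : ℂ, Gpoly.IsRoot w → 0 < w.im := by
      intro w hw
      have hevalG : eval w Gpoly = ∑ j ∈ Finset.range (n+1),
          (n.choose j : ℂ) * ((B (n-j) : ℝ) : ℂ) * (-z)^(n-j) * w^j := by
        rw [hG, eval_finset_sum]
        apply Finset.sum_congr rfl
        intro j _
        rw [eval_mul, eval_pow, eval_C, eval_X]
      have hrefl : eval w Gpoly = ∑ k ∈ Finset.range (n+1),
          (n.choose k : ℂ) * ((B k : ℝ) : ℂ) * (-z)^k * w^(n-k) := by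
        rw [hevalG, ← Finset.sum_range_reflect]
        apply Finset.sum_congr rfl
        intro k hk
        have hkn : k ≤ n := by
          simp only [Finset.mem_range] at hk
          omega
        rw [show n + 1 - 1 - k = n - k from by omega, Nat.choose_symm hkn,
          show n - (n - k) = k from by omega]
      have hBC : ∀ k ∈ Finset.range (n+1), (n.choose k : ℂ) * ((B k : ℝ) : ℂ) * (-z)^k * w^(n-k)
          = (n.choose k : ℂ) * (∑ m ∈ Finset.range (k+1), ((k.choose m : ℂ)) * ((γ m : ℝ) : ℂ) *
            ((t : ℝ) : ℂ)^m * (((1-t : ℝ)) : ℂ)^(k-m)) * (-z)^k * w^(n-k) := by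
        intro k _
        rw [hBalt k]
        push_cast
        ring
      have hw' : eval w Gpoly = 0 := hw
      rw [hrefl, Finset.sum_congr rfl hBC,
        swap_identity n (fun m => ((γ m : ℝ) : ℂ)) ((t : ℝ) : ℂ) (((1-t : ℝ)) : ℂ) (-z) w] at hw'
      have hb := binform ((γ n : ℝ) : ℂ) M gC n hfact hγnC hMcard
        (((t : ℝ) : ℂ) * (-z)) (w + (((1-t : ℝ)) : ℂ) * (-z))
      have hmatch : ∑ m ∈ Finset.range (n+1), (n.choose m : ℂ) * ((γ m : ℝ) : ℂ) *
            (((t : ℝ) : ℂ) * (-z))^m * (w + (((1-t : ℝ)) : ℂ) * (-z))^(n-m)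
          = ∑ k ∈ Finset.range (n+1), gC.coeff k * (((t : ℝ) : ℂ) * (-z))^k *
            (w + (((1-t : ℝ)) : ℂ) * (-z))^(n-k) := by
        apply Finset.sum_congr rfl
        intro m hm
        have hmn : m ≤ n := by
          simp only [Finset.mem_range] at hm
          omega
        rw [hgC, coeff_map, hgscoeff, if_pos hmn, Complex.coe_algebraMap]
        push_cast
        ring
      rw [hmatch, hb] at hw'
      -- extract a vanishing factor
      rcases mul_eq_zero.mp hw' with h | h
      · exact absurd h hγnC
      · obtain ⟨r, hr, hy0⟩ := Multiset.mem_map.mp (Multiset.prod_eq_zero_iff.mp h)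
        obtain ⟨hrim, hrre⟩ := hMneg r hr
        have hrx : r = ((r.re : ℝ) : ℂ) := Complex.ext rfl (by rw [hrim, Complex.ofReal_im])
        rw [hrx] at hy0
        have him2 := congrArg Complex.im hy0
        simp only [Complex.sub_im, Complex.mul_im, Complex.add_im, Complex.neg_im,
          Complex.ofReal_re, Complex.ofReal_im, Complex.zero_im, zero_mul, mul_zero,
          zero_add, add_zero, sub_zero] at him2
        have him3 : r.re * w.im = (r.re * (1 - t) - t) * z.im := by
          linear_combination -him2
        have hc0 : r.re * (1 - t) - t < 0 := by
          rcases lt_or_eq_of_le ht1 with h1 | h1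
          · nlinarith
          · rw [h1]
            norm_num
        nlinarith [him3, hc0, hzim, hrre, mul_pos (neg_pos.mpr hc0) hzim]
    -- construct the disk
    have hWne : Gpoly.roots.toFinset.Nonempty := by
      rw [Multiset.toFinset_nonempty]
      intro h
      have hcard : Gpoly.roots.card = n := by
        rw [(splits_iff_card_roots).mp (IsAlgClosed.splits Gpoly), hGdeg]
      rw [h] at hcard
      simp at hcard
      omega
    obtain ⟨δ, hδpos, hδle⟩ : ∃ δ : ℝ, 0 < δ ∧ ∀ y : ℂ, Gpoly.IsRoot y → δ ≤ y.im := by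
      refine ⟨Gpoly.roots.toFinset.inf' hWne (fun w => w.im), ?_, ?_⟩
      · obtain ⟨w0, hw0, he⟩ := Finset.exists_mem_eq_inf' hWne (fun w => w.im)
        rw [he]
        exact hGroots w0 (isRoot_of_mem_roots (Multiset.mem_toFinset.mp hw0))
      · intro y hy
        exact Finset.inf'_le _ (Multiset.mem_toFinset.mpr ((mem_roots hG0).mpr hy))
    obtain ⟨Mx, hMx0, hMxle⟩ : ∃ Mx : ℝ, 0 ≤ Mx ∧
        ∀ y : ℂ, Gpoly.IsRoot y → Complex.abs y ≤ Mx := by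
      refine ⟨Gpoly.roots.toFinset.sup' hWne (fun w => Complex.abs w), ?_, ?_⟩
      · obtain ⟨w0, hw0⟩ := hWne
        calc (0:ℝ) ≤ Complex.abs w0 := AbsoluteValue.nonneg _ _
          _ ≤ _ := Finset.le_sup' _ hw0
      · intro y hy
        exact Finset.le_sup' _ (Multiset.mem_toFinset.mpr ((mem_roots hG0).mpr hy))
    set K : ℝ := Mx^2/δ + δ with hK
    set R : ℝ := K - δ/2 with hR
    clear_value K R
    have hKδ : K * δ = Mx^2 + δ^2 := by
      rw [hK]
      field_simp
    have hKpos : 0 < K := by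
      rw [hK]
      positivity
    have hKδ2 : δ ≤ K := by
      have h8 : 0 ≤ Mx^2/δ := by positivity
      rw [hK]
      linarith
    have hRpos : 0 ≤ R := by
      rw [hR]
      linarith
    have hRK : R < K := by
      rw [hR]
      linarith
    set c : ℂ := (K : ℂ) * Complex.I with hc
    clear_value c
    have hcre : c.re = 0 := by
      rw [hc]
      simp
    have hcim : c.im = K := by
      rw [hc]
      simp
    have hnormc : ∀ y : ℂ, Complex.normSq (y - c) = y.re^2 + (y.im - K)^2 := by
      intro y
      rw [Complex.normSq_apply, Complex.sub_re, Complex.sub_im, hcre, hcim]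
      ring
    have hcontain : ∀ y : ℂ, Gpoly.IsRoot y → Complex.abs (y - c) ≤ R := by
      intro y hy
      have h1 : δ ≤ y.im := hδle y hy
      have h2 : Complex.abs y ≤ Mx := hMxle y hy
      rw [abs_le_iff_normSq_le _ _ hRpos, hnormc]
      have habs2 : y.re^2 + y.im^2 ≤ Mx^2 := by
        have h3 : (Complex.abs y)^2 ≤ Mx^2 :=
          pow_le_pow_left₀ (AbsoluteValue.nonneg _ _) h2 2
        rw [Complex.sq_abs, Complex.normSq_apply] at h3
        nlinarith
      rw [hR]
      nlinarith [mul_le_mul_of_nonneg_left h1 (le_of_lt hKpos), habs2, hKδ, hδpos]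
    have hfar : ∀ y : ℂ, pC.IsRoot y → ¬ Complex.abs (y - c) ≤ R := by
      intro y hy hle
      have hyim : y.im = 0 := by
        apply hp y
        rw [aeval_def, ← eval_map, ← hpC]
        exact hy
      rw [abs_le_iff_normSq_le _ _ hRpos, hnormc, hyim] at hle
      nlinarith [hRK, hRpos, sq_nonneg y.re]
    exact grace n pC Gpoly c R hRpos (le_of_eq hpCdeg) (le_of_eq hGdeg) hpCn
      (by rw [hGn]; exact hγ0C) hcontain hfar hApolar
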